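/- arXiv:1804.01801 — 5 statements merged into one kernel-verified Lean document; each statement's English description precedes it below -/
import Mathlib

section
/- For any integer m and nonnegative integer k, the sum over i from 0 to k of C(m-i, i) * C(i-m+k, k-i) equals the sum over i from 0 to k+2 of C(m-i, i) * C(i-m+k+2, k+2-i). -/
/-- The generalized binomial coefficient `C(a, b) = a(a-1)⋯(a-b+1)/b!`
for an integer `a` and a natural number `b`, valued in `ℚ`. -/
noncomputable def genChoose (a : ℤ) (b : ℕ) : ℚ :=
  (∏ i ∈ Finset.range b, ((a : ℚ) - i)) / (Nat.factorial b : ℚ)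

lemma genChoose_zero (a : ℤ) : genChoose a 0 = 1 := by simp [genChoose]

lemma genChoose_pascal (a : ℤ) (b : ℕ) :
    genChoose a (b + 1) = genChoose (a - 1) (b + 1) + genChoose (a - 1) b := by
  have hfac : (Nat.factorial (b + 1) : ℚ) = (b + 1) * Nat.factorial b := by
    exact_mod_cast Nat.factorial_succ b
  have hf0 : (Nat.factorial b : ℚ) ≠ 0 := by
    exact_mod_cast Nat.factorial_ne_zero b
  have hb1 : ((b : ℚ) + 1) ≠ 0 := by positivity
  have hN : (∏ i ∈ Finset.range (b + 1), ((a : ℚ) - i)) =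
      (a : ℚ) * ∏ i ∈ Finset.range b, (((a - 1 : ℤ) : ℚ) - i) := by
    rw [Finset.prod_range_succ']
    have : ∀ i : ℕ, ((a : ℚ) - ((i + 1 : ℕ) : ℚ)) = (((a - 1 : ℤ) : ℚ) - i) := by
      intro i; push_cast; ring
    rw [Finset.prod_congr rfl (fun i _ => this i)]
    ring
  have hP : (∏ i ∈ Finset.range (b + 1), (((a - 1 : ℤ) : ℚ) - i)) =
      (∏ i ∈ Finset.range b, (((a - 1 : ℤ) : ℚ) - i)) * (((a - 1 : ℤ) : ℚ) - b) :=
    Finset.prod_range_succ _ _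
  rw [genChoose, genChoose, genChoose, hN, hP, hfac]
  field_simp
  push_cast
  ring

lemma genChoose_nat_lt {a b : ℕ} (h : a < b) : genChoose (a : ℤ) b = 0 := by
  rw [genChoose]
  rw [Finset.prod_eq_zero (Finset.mem_range.2 h) (by push_cast; ring)]
  simp

lemma genChoose_nat_self (a : ℕ) : genChoose (a : ℤ) a = 1 := by
  have key : ∀ a : ℕ, (∏ i ∈ Finset.range a, ((a : ℚ) - i)) = Nat.factorial a := by
    intro a
    induction a with
    | zero => simp
    | succ n ih =>
      rw [Finset.prod_range_succ']
      have : ∀ i : ℕ, (((n + 1 : ℕ) : ℚ) - ((i + 1 : ℕ) : ℚ)) = ((n : ℚ) - i) := by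
        intro i; push_cast; ring
      rw [Finset.prod_congr rfl (fun i _ => this i), ih]
      rw [Nat.factorial_succ]
      push_cast; ring
  rw [genChoose]
  push_cast
  rw [key]
  have : (Nat.factorial a : ℚ) ≠ 0 := by exact_mod_cast Nat.factorial_ne_zero a
  field_simp

noncomputable def Ssum (m : ℤ) (k : ℕ) : ℚ :=
  ∑ i ∈ Finset.range (k + 1), genChoose (m - i) i * genChoose ((i : ℤ) - m + k) (k - i)

noncomputable def Tsum (m : ℤ) (k : ℕ) : ℚ :=
  ∑ i ∈ Finset.range (k + 1), genChoose (m - i) i * genChoose ((i : ℤ) - m + k - 1) (k - i)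

lemma relA (m : ℤ) (k : ℕ) : Ssum m (k + 1) = Tsum m (k + 1) + Ssum m k := by
  have hmain : ∀ i ∈ Finset.range (k + 1),
      genChoose (m - i) i * genChoose ((i : ℤ) - m + ((k : ℤ) + 1)) (k + 1 - i) =
      genChoose (m - i) i * genChoose ((i : ℤ) - m + ((k : ℤ) + 1) - 1) (k + 1 - i) +
      genChoose (m - i) i * genChoose ((i : ℤ) - m + k) (k - i) := by
    intro i hi
    have hik : i ≤ k := Nat.lt_succ_iff.1 (Finset.mem_range.1 hi)
    have hsub : (k + 1) - i = (k - i) + 1 := by omega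
    rw [hsub, genChoose_pascal]
    have e1 : (i : ℤ) - m + ((k : ℤ) + 1) - 1 = (i : ℤ) - m + k := by ring
    rw [e1]; ring
  rw [Ssum, Tsum, Ssum, Finset.sum_range_succ (n := k + 1), Finset.sum_range_succ (n := k + 1)]
  push_cast
  rw [Finset.sum_congr rfl hmain, Finset.sum_add_distrib]
  simp only [Nat.sub_self, genChoose_zero, mul_one]
  ring

lemma relB (m : ℤ) (k : ℕ) : Ssum (m + 1) (k + 1) = Tsum m (k + 1) + Ssum (m - 1) k := by
  have hmain : ∀ j ∈ Finset.range (k + 1),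
      genChoose (m + 1 - ((j : ℤ) + 1)) (j + 1) *
        genChoose (((j : ℤ) + 1) - (m + 1) + ((k : ℤ) + 1)) (k - j) =
      genChoose (m - ((j : ℤ) + 1)) (j + 1) *
        genChoose (((j : ℤ) + 1) - m + ((k : ℤ) + 1) - 1) (k - j) +
      genChoose (m - 1 - (j : ℤ)) j * genChoose ((j : ℤ) - (m - 1) + k) (k - j) := by
    intro j hj
    have e0 : m + 1 - ((j : ℤ) + 1) = m - j := by ring
    have e2 : ((j : ℤ) + 1) - (m + 1) + ((k : ℤ) + 1) = (j : ℤ) - m + (k : ℤ) + 1 := by ring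
    have e2' : ((j : ℤ) + 1) - m + ((k : ℤ) + 1) - 1 = (j : ℤ) - m + (k : ℤ) + 1 := by ring
    have e3 : (j : ℤ) - (m - 1) + (k : ℤ) = (j : ℤ) - m + (k : ℤ) + 1 := by ring
    have e5 : m - ((j : ℤ) + 1) = m - (j : ℤ) - 1 := by ring
    have e6 : m - 1 - (j : ℤ) = m - (j : ℤ) - 1 := by ring
    rw [e0, e2, e2', e3, e5, e6, genChoose_pascal]
    ring
  rw [Ssum, Tsum, Ssum, Finset.sum_range_succ' _ (k + 1), Finset.sum_range_succ' _ (k + 1)]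
  push_cast
  rw [Finset.sum_congr rfl hmain, Finset.sum_add_distrib]
  simp only [genChoose_zero, one_mul, sub_zero, zero_sub]
  have e7 : -(m + 1) + ((k : ℤ) + 1) = -m + ((k : ℤ) + 1) - 1 := by ring
  rw [e7]
  ring

lemma Ssum_zero (m : ℤ) : Ssum m 0 = 1 := by
  simp [Ssum, genChoose_zero]

lemma Ssum_indep : ∀ (k : ℕ) (m : ℤ), Ssum (m + 1) k = Ssum m k := by
  intro k
  induction k with
  | zero => intro m; rw [Ssum_zero, Ssum_zero]
  | succ n ih =>
    intro m
    have hA := relA m n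
    have hB := relB m n
    have hI := ih (m - 1)
    rw [sub_add_cancel] at hI
    rw [hB, hA, hI]

lemma Ssum_const (k : ℕ) (m m' : ℤ) : Ssum m k = Ssum m' k := by
  suffices h : ∀ a : ℤ, Ssum a k = Ssum 0 k by rw [h m, h m']
  intro a
  induction a using Int.induction_on with
  | zero => rfl
  | succ n ih => rw [Ssum_indep k n]; exact ih
  | pred n ih =>
    have h2 := Ssum_indep k (-(n : ℤ) - 1)
    rw [sub_add_cancel] at h2
    rw [← h2]
    exact ih

lemma Ssum_diag (k : ℕ) : Ssum (k : ℤ) k = if Even k then 1 else 0 := by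
  have hterm : ∀ i ∈ Finset.range (k + 1),
      genChoose ((k : ℤ) - i) i * genChoose ((i : ℤ) - k + k) (k - i) =
      if 2 * i = k then 1 else 0 := by
    intro i hi
    have hik : i ≤ k := Nat.lt_succ_iff.1 (Finset.mem_range.1 hi)
    have e1 : (k : ℤ) - i = ((k - i : ℕ) : ℤ) := by
      push_cast [Nat.cast_sub hik]; ring
    have e2 : (i : ℤ) - k + k = ((i : ℕ) : ℤ) := by ring
    rw [e1, e2]
    by_cases h : 2 * i = k
    · have hkk : k - i = i := by omega
      rw [if_pos h, hkk, genChoose_nat_self]; norm_num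
    · rw [if_neg h]
      rcases Nat.lt_or_ge (2 * i) k with hlt | hge
      · have : i < k - i := by omega
        rw [genChoose_nat_lt this, mul_zero]
      · have : k - i < i := by omega
        rw [genChoose_nat_lt this, zero_mul]
  rw [Ssum, Finset.sum_congr rfl hterm]
  by_cases hk : Even k
  · obtain ⟨n, hn⟩ := hk
    rw [if_pos ⟨n, hn⟩]
    rw [Finset.sum_eq_single_of_mem n (Finset.mem_range.2 (by omega))]
    · rw [if_pos (by omega)]
    · intro b _ hb
      rw [if_neg (by omega)]
  · rw [if_neg hk]
    apply Finset.sum_eq_zero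
    intro i _
    rw [if_neg (by intro h; exact hk ⟨i, by omega⟩)]

theorem stmt0 (m : ℤ) (k : ℕ) :
    ∑ i ∈ Finset.range (k + 1),
        genChoose (m - i) i * genChoose ((i : ℤ) - m + k) (k - i) =
      ∑ i ∈ Finset.range (k + 3),
        genChoose (m - i) i * genChoose ((i : ℤ) - m + k + 2) (k + 2 - i) := by
  have hL : (∑ i ∈ Finset.range (k + 1),
      genChoose (m - i) i * genChoose ((i : ℤ) - m + k) (k - i)) = Ssum m k := rfl
  have hR : (∑ i ∈ Finset.range (k + 3),
      genChoose (m - i) i * genChoose ((i : ℤ) - m + k + 2) (k + 2 - i)) = Ssum m (k + 2) := by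
    rw [Ssum]
    apply Finset.sum_congr (by norm_num)
    intro i _
    congr 2
    push_cast; ring
  rw [hL, hR, Ssum_const k m (k : ℤ), Ssum_const (k + 2) m ((k + 2 : ℕ) : ℤ), Ssum_diag,
    Ssum_diag]
  have hpar : Even (k + 2) ↔ Even k := by simp [Nat.even_add]
  simp [hpar]
end

section
/- For nonnegative integers m, k with m >= k, the sum over i from 0 to k of C(m-i, i) * C(i, k-i) is congruent to C(m+1, k) modulo 2. -/
open Finset

def Saux (m k : ℕ) : ℕ := ∑ i ∈ Finset.range (k+1), Nat.choose (m - i) i * Nat.choose i (k - i)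

lemma pascal1 (m i : ℕ) :
    Nat.choose (m + 1 - i) (i+1) = Nat.choose (m - i) i + Nat.choose (m - i) (i+1) := by
  rcases le_or_gt i m with h | h
  · rw [show m + 1 - i = (m - i) + 1 by omega, Nat.choose_succ_succ']
  · rw [show m + 1 - i = 0 by omega, show m - i = 0 by omega]
    simp [Nat.choose_eq_zero_of_lt (by omega : (0:ℕ) < i)]

lemma Saux_rec (m k : ℕ) :
    Saux (m+2) (k+2) = Saux (m+1) (k+2) + Saux m (k+1) + Saux m k := by
  have hB : Saux (m+1) (k+2)
      = ∑ i ∈ range (k+2), Nat.choose (m - i) (i+1) * Nat.choose (i+1) (k+1-i) := by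
    rw [Saux, Finset.sum_range_succ']
    simp only [Nat.sub_zero, Nat.choose_zero_right, Nat.choose_zero_succ, one_mul,
      Nat.choose_zero_succ, mul_zero, add_zero]
    apply Finset.sum_congr rfl
    intro i hi
    congr 2
    · omega
    · omega
  have hmain : Saux (m+2) (k+2)
      = ∑ i ∈ range (k+2),
          (Nat.choose (m - i) i + Nat.choose (m - i) (i+1)) * Nat.choose (i+1) (k+1-i) := by
    rw [Saux, Finset.sum_range_succ']
    simp only [Nat.sub_zero, Nat.choose_zero_succ, mul_zero, add_zero]
    apply Finset.sum_congr rfl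
    intro i hi
    rw [show m + 2 - (i+1) = m + 1 - i by omega, pascal1,
      show k + 2 - (i+1) = k + 1 - i by omega]
  have hA : ∑ i ∈ range (k+2), Nat.choose (m - i) i * Nat.choose (i+1) (k+1-i)
      = Saux m (k+1) + Saux m k := by
    rw [Finset.sum_range_succ]
    have h1 : ∀ i ∈ range (k+1),
        Nat.choose (m - i) i * Nat.choose (i+1) (k+1-i)
        = Nat.choose (m - i) i * Nat.choose i (k+1-i)
          + Nat.choose (m - i) i * Nat.choose i (k-i) := by
      intro i hi
      simp only [Finset.mem_range] at hi
      rw [show k + 1 - i = (k - i) + 1 by omega, Nat.choose_succ_succ', mul_add,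
        show (k - i) + 1 = k + 1 - i by omega]
      ring
    rw [Finset.sum_congr rfl h1, Finset.sum_add_distrib]
    have h2 : Saux m (k+1) = (∑ i ∈ range (k+1), Nat.choose (m - i) i * Nat.choose i (k+1-i))
        + Nat.choose (m - (k+1)) (k+1) := by
      rw [Saux, Finset.sum_range_succ]
      simp
    have h3 : Saux m k = ∑ i ∈ range (k+1), Nat.choose (m - i) i * Nat.choose i (k-i) := rfl
    rw [show k + 1 - (k+1) = 0 by omega]
    simp only [Nat.choose_zero_right, mul_one]
    omega
  rw [hmain]
  simp only [add_mul, Finset.sum_add_distrib]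
  rw [← hB]
  have := hA
  omega

lemma Saux_zero (k : ℕ) : Saux 0 k = Nat.choose 0 k := by
  rw [Saux]
  rw [Finset.sum_eq_single 0]
  · simp
  · intro i hi h0
    rw [show (0:ℕ) - i = 0 by omega, Nat.choose_eq_zero_of_lt (by omega : 0 < i), zero_mul]
  · intro h; simp at h

lemma Saux_one (k : ℕ) : Saux 1 k = Nat.choose 0 k := by
  rw [Saux]
  rw [Finset.sum_eq_single 0]
  · simp
  · intro i hi h0
    rw [show (1:ℕ) - i = 0 by omega, Nat.choose_eq_zero_of_lt (by omega : 0 < i), zero_mul]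
  · intro h; simp at h

lemma main_lemma (m : ℕ) : ∀ k : ℕ,
    (Saux m k : ZMod 2) + (if k = m + 1 then 1 else 0) = (Nat.choose (m+1) k : ZMod 2) := by
  induction m using Nat.twoStepInduction with
  | zero =>
    intro k
    rw [Saux_zero]
    match k with
    | 0 => decide
    | 1 => simp
    | (k+2) => simp [Nat.choose_eq_zero_of_lt (by omega : 1 < k + 2), Nat.choose_zero_succ]
  | one =>
    intro k
    rw [Saux_one]
    match k with
    | 0 => decide
    | 1 => norm_num [Nat.choose_zero_succ]; decide
    | 2 => norm_num [Nat.choose_zero_succ]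
    | (k+3) => simp [Nat.choose_eq_zero_of_lt (by omega : 2 < k + 3), Nat.choose_zero_succ]
  | more m ih1 ih2 =>
    intro k
    match k with
    | 0 =>
      have : Saux (m+2) 0 = 1 := by simp [Saux]
      simp [this]
    | 1 =>
      have hS : Saux (m+2) 1 = m + 1 := by
        rw [Saux]
        simp [Finset.sum_range_succ, Nat.choose_zero_succ]
      rw [hS, if_neg (by omega), add_zero, Nat.choose_one_right]
      push_cast
      ring_nf
      have : (2 : ZMod 2) = 0 := by decide
      linear_combination -this
    | (k+2) =>
      have hrec := Saux_rec m k
      have hC : Nat.choose (m+3) (k+2)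
          = Nat.choose (m+2) (k+2) + Nat.choose (m+1) (k+1) + Nat.choose (m+1) k := by
        have h1 := Nat.choose_succ_succ' (m+2) (k+1)
        have h2 := Nat.choose_succ_succ' (m+1) k
        simp only [show m+2+1 = m+3 from by omega, show k+1+1 = k+2 from by omega,
          show m+1+1 = m+2 from by omega] at h1 h2
        omega
      have e1 := ih2 (k+2)
      simp only [show m+1+1 = m+2 from by omega] at e1 ih2
      have e2 := ih1 (k+1)
      have e3 := ih1 k
      have hc2 : (2 : ZMod 2) = 0 := by decide
      rw [show (m + 2 + 1 : ℕ) = m + 3 by ring] at *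
      rw [hC, hrec]
      push_cast
      simp only [show (k + 2 = m + 2) ↔ (k = m) from by omega,
        show (k + 1 = m + 1) ↔ (k = m) from by omega,
        show (k + 2 = m + 3) ↔ (k = m + 1) from by omega] at *
      by_cases h1 : k = m
      · simp only [if_pos h1, if_neg (by omega : ¬ k = m + 1)] at *
        linear_combination e1 + e2 + e3 - hc2
      · by_cases h2 : k = m + 1
        · simp only [if_neg h1, if_pos h2] at *
          linear_combination e1 + e2 + e3
        · simp only [if_neg h1, if_neg h2] at *
          linear_combination e1 + e2 + e3

theorem stmt3 (m k : ℕ) (h : k ≤ m) :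
    (∑ i ∈ Finset.range (k + 1), Nat.choose (m - i) i * Nat.choose i (k - i)) ≡
      Nat.choose (m + 1) k [MOD 2] := by
  have := main_lemma m k
  rw [if_neg (by omega : ¬ k = m + 1), add_zero] at this
  exact (ZMod.natCast_eq_natCast_iff _ _ _).mp this
end

section
/- For integers n, e with 2^e + 3 <= n <= 2^{e+1}, the generalized binomial coefficient C(-(n-2), 2^{e+1}+2-n) is congruent modulo 2 to C(2^{e+1}-1, n-3), and hence is odd. -/
lemma aux_multichoose_neg (m k : ℕ) (hm : 1 ≤ m) :
    Ring.multichoose (-(m : ℤ)) k = (-1) ^ k * Nat.choose m k := by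
  have h : (-(m : ℤ)) = Int.negSucc (m - 1) := by
    rw [Int.negSucc_eq]
    push_cast
    omega
  show Int.multichoose (-(m : ℤ)) k = _
  rw [h, Int.multichoose]
  rw [Nat.sub_add_cancel hm]
  rw [Int.coe_negOnePow_natCast]

lemma aux_odd_choose_pow_sub_one (t : ℕ) : ∀ k : ℕ, k ≤ 2 ^ t - 1 →
    Nat.choose (2 ^ t - 1) k % 2 = 1 := by
  induction t with
  | zero => intro k hk; interval_cases k <;> simp
  | succ t ih =>
    intro k hk
    haveI : Fact (Nat.Prime 2) := ⟨by norm_num⟩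
    have hL := Choose.choose_modEq_choose_mod_mul_choose_div_nat (p := 2) (n := 2 ^ (t + 1) - 1)
      (k := k)
    have h1 : (2 ^ (t + 1) - 1) % 2 = 1 := by
      have : 2 ^ (t + 1) = 2 * 2 ^ t := by ring
      have h2t : 1 ≤ 2 ^ t := Nat.one_le_two_pow
      omega
    have h2 : (2 ^ (t + 1) - 1) / 2 = 2 ^ t - 1 := by
      have : 2 ^ (t + 1) = 2 * 2 ^ t := by ring
      have h2t : 1 ≤ 2 ^ t := Nat.one_le_two_pow
      omega
    have h3 : Nat.choose 1 (k % 2) = 1 := by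
      have : k % 2 < 2 := Nat.mod_lt _ (by norm_num)
      interval_cases h : k % 2 <;> simp
    rw [h1, h2, h3, one_mul] at hL
    have h4 : k / 2 ≤ 2 ^ t - 1 := by
      have : 2 ^ (t + 1) = 2 * 2 ^ t := by ring
      have h2t : 1 ≤ 2 ^ t := Nat.one_le_two_pow
      omega
    have := ih (k / 2) h4
    unfold Nat.ModEq at hL
    omega

/- `Ring.choose (a : ℤ) b` is the generalized binomial coefficient
`a(a-1)⋯(a-b+1)/b!` (ℤ is a binomial ring). -/
theorem stmt7 (n e : ℕ) (h1 : 2 ^ e + 3 ≤ n) (h2 : n ≤ 2 ^ (e + 1)) :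
    Ring.choose (-((n : ℤ) - 2)) (2 ^ (e + 1) + 2 - n) ≡
        (Nat.choose (2 ^ (e + 1) - 1) (n - 3) : ℤ) [ZMOD 2] ∧
      Odd (Ring.choose (-((n : ℤ) - 2)) (2 ^ (e + 1) + 2 - n)) := by
  set k := 2 ^ (e + 1) + 2 - n with hk
  set m := 2 ^ (e + 1) - 1 with hm
  have hpow : 2 ^ e + 1 ≤ 2 ^ (e + 1) := by
    have : 2 ^ (e + 1) = 2 * 2 ^ e := by ring
    have h2e : 1 ≤ 2 ^ e := Nat.one_le_two_pow
    omega
  have hn3 : 3 ≤ n := by omega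
  have hm1 : 1 ≤ m := by omega
  have hkm : k ≤ m := by omega
  have hkey : Ring.choose (-((n : ℤ) - 2)) k = (-1) ^ k * Nat.choose m k := by
    rw [Ring.choose]
    have harg : (-((n : ℤ) - 2)) - (k : ℤ) + 1 = -(m : ℤ) := by
      have hk' : n + k = 2 ^ (e + 1) + 2 := by omega
      have hm' : m + 1 = 2 ^ (e + 1) := by omega
      omega
    rw [harg, aux_multichoose_neg m k hm1]
  have hsymm : Nat.choose m k = Nat.choose m (n - 3) := by
    have : m - k = n - 3 := by omega
    rw [← this, Nat.choose_symm hkm]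
  have hodd : Nat.choose m k % 2 = 1 := by
    rw [hsymm]
    exact aux_odd_choose_pow_sub_one (e + 1) (n - 3) (by omega)
  constructor
  · rw [hkey, hsymm]
    have hsign : ((-1 : ℤ)) ^ k ≡ 1 [ZMOD 2] := by
      have h : (-1 : ℤ) ≡ 1 [ZMOD 2] := by decide
      simpa using h.pow k
    calc ((-1 : ℤ)) ^ k * (Nat.choose m (n - 3) : ℤ)
        ≡ 1 * (Nat.choose m (n - 3) : ℤ) [ZMOD 2] := hsign.mul_right _
      _ = (Nat.choose m (n - 3) : ℤ) := one_mul _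
  · rw [hkey]
    have hoddZ : Odd ((Nat.choose m k : ℤ)) := by
      rw [Int.odd_iff]
      omega
    rcases Nat.even_or_odd k with hke | hko
    · rw [hke.neg_one_pow, one_mul]; exact hoddZ
    · rw [hko.neg_one_pow, neg_one_mul]; exact hoddZ.neg
end

section
/- In the truncated polynomial ring F_2[R]/(R^{m+1}), the element sum over k <= m of (sum over i of C(m-i,i)*C(i,k-i)) * R^k equals (1+R)^{m+1}. -/
open Polynomial

noncomputable def fp (m : ℕ) : Polynomial (ZMod 2) :=
  ∑ i ∈ Finset.range (m + 1),
    Polynomial.C ((Nat.choose (m - i) i : ZMod 2)) * (X * (1 + X)) ^ i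

lemma fp_rec (m : ℕ) : fp (m + 2) = fp (m + 1) + (X * (1 + X)) * fp m := by
  have hpascal : ∀ i ∈ Finset.range (m + 2),
      (Nat.choose (m + 2 - (i + 1)) (i + 1) : ℕ)
        = Nat.choose (m - i) i + Nat.choose (m - i) (i + 1) := by
    intro i hi
    rcases Nat.lt_or_ge i (m + 1) with h | h
    · have : m + 2 - (i + 1) = (m - i) + 1 := by omega
      rw [this, Nat.choose_succ_succ]
    · have hi' : i = m + 1 := by simp at hi; omega
      subst hi'
      simp [Nat.choose_eq_zero_of_lt]
  have step1 : fp (m + 2)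
      = ∑ i ∈ Finset.range (m + 2),
          (Polynomial.C ((Nat.choose (m - i) i : ZMod 2))
            + Polynomial.C ((Nat.choose (m - i) (i + 1) : ZMod 2))) * (X * (1 + X)) ^ (i + 1)
        + 1 := by
    rw [fp, Finset.sum_range_succ']
    simp only [pow_zero, Nat.sub_zero, Nat.choose_zero_right, Nat.cast_one, map_one, one_mul,
      mul_one]
    congr 1
    refine Finset.sum_congr rfl fun i hi => ?_
    rw [hpascal i hi]
    push_cast
    rw [map_add]
  rw [step1]
  have sp : ∀ f : ℕ → Polynomial (ZMod 2), True := fun _ => trivial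
  rw [Finset.sum_congr rfl (fun (i : ℕ) _ => add_mul
      (Polynomial.C ((Nat.choose (m - i) i : ZMod 2)))
      (Polynomial.C ((Nat.choose (m - i) (i + 1) : ZMod 2))) ((X * (1 + X)) ^ (i + 1))),
    Finset.sum_add_distrib]
  have e1 : ∑ i ∈ Finset.range (m + 2),
      Polynomial.C ((Nat.choose (m - i) i : ZMod 2)) * (X * (1 + X)) ^ (i + 1)
      = (X * (1 + X)) * fp m := by
    rw [Finset.sum_range_succ]
    have : (Nat.choose (m - (m + 1)) (m + 1) : ZMod 2) = 0 := by
      simp [Nat.choose_eq_zero_of_lt]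
    rw [this]
    simp only [map_zero, zero_mul, add_zero]
    rw [fp, Finset.mul_sum]
    refine Finset.sum_congr rfl fun i _ => ?_
    ring
  have expand : fp (m + 1) = (∑ i ∈ Finset.range (m + 1),
      Polynomial.C ((Nat.choose (m - i) (i + 1) : ZMod 2)) * (X * (1 + X)) ^ (i + 1)) + 1 := by
    rw [fp, Finset.sum_range_succ']
    congr 1
    · refine Finset.sum_congr rfl fun i _ => ?_
      have h : m + 1 - (i + 1) = m - i := by omega
      rw [h]
    · simp
  have e2 : ∑ i ∈ Finset.range (m + 2),
      Polynomial.C ((Nat.choose (m - i) (i + 1) : ZMod 2)) * (X * (1 + X)) ^ (i + 1)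
      = fp (m + 1) - 1 := by
    rw [Finset.sum_range_succ]
    have hz : (Nat.choose (m - (m + 1)) (m + 1 + 1) : ZMod 2) = 0 := by
      simp [Nat.choose_eq_zero_of_lt]
    rw [hz]
    simp only [map_zero, zero_mul, add_zero]
    rw [expand]
    ring
  rw [e1, e2]
  ring

lemma fp_closed (m : ℕ) : fp m = (1 + X) ^ (m + 1) + X ^ (m + 1) := by
  have h2 : (2 : Polynomial (ZMod 2)) = 0 := by
    have := CharP.cast_eq_zero (Polynomial (ZMod 2)) 2
    simpa using this
  induction m using Nat.strong_induction_on with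
  | _ m ih =>
    match m with
    | 0 => simp [fp]; linear_combination (-X : Polynomial (ZMod 2)) * h2
    | 1 =>
      have : fp 1 = 1 := by
        rw [fp]
        simp [Finset.sum_range_succ, Nat.choose_eq_zero_of_lt]
      rw [this]
      linear_combination (-X - X^2 : Polynomial (ZMod 2)) * h2
    | (n + 2) =>
      have h1 := ih (n + 1) (by omega)
      have h0 := ih n (by omega)
      rw [fp_rec, h1, h0]
      linear_combination ((X : Polynomial (ZMod 2))^(n+2)) * h2

lemma sum_eq_fp (m : ℕ) :
    ∑ k ∈ Finset.range (m + 1),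
      ((∑ i ∈ Finset.range (k + 1), Nat.choose (m - i) i * Nat.choose i (k - i) : ℕ) :
        Polynomial (ZMod 2)) * X ^ k = fp m := by
  ext n
  rw [finset_sum_coeff, fp, finset_sum_coeff]
  have lhs_term : ∀ k,
      (((∑ i ∈ Finset.range (k + 1), Nat.choose (m - i) i * Nat.choose i (k - i) : ℕ) :
          Polynomial (ZMod 2)) * X ^ k).coeff n
        = if n = k then
            ((∑ i ∈ Finset.range (k + 1), Nat.choose (m - i) i * Nat.choose i (k - i) : ℕ) :
              ZMod 2) else 0 := by
    intro k
    rw [← Polynomial.C_eq_natCast, Polynomial.coeff_C_mul, Polynomial.coeff_X_pow]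
    simp [mul_ite]
  have rhs_term : ∀ i,
      (Polynomial.C ((Nat.choose (m - i) i : ZMod 2)) * (X * (1 + X)) ^ i).coeff n
        = (Nat.choose (m - i) i : ZMod 2) *
            (if i ≤ n then ((Nat.choose i (n - i) : ZMod 2)) else 0) := by
    intro i
    rw [mul_pow, Polynomial.coeff_C_mul, Polynomial.coeff_X_pow_mul']
    simp only [Polynomial.coeff_one_add_X_pow]
  simp only [lhs_term, rhs_term]
  rw [Finset.sum_ite_eq (Finset.range (m + 1)) n]
  by_cases hn : n ≤ m
  · rw [if_pos (Finset.mem_range.mpr (by omega))]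
    have hsub : Finset.range (n + 1) ⊆ Finset.range (m + 1) :=
      Finset.range_subset_range.mpr (by omega)
    rw [← Finset.sum_subset hsub (fun x hx hnx => by
      rw [if_neg, mul_zero]
      simp only [Finset.mem_range] at hx hnx
      omega)]
    push_cast
    refine Finset.sum_congr rfl fun i hi => ?_
    rw [if_pos (by simp only [Finset.mem_range] at hi; omega)]
  · rw [if_neg (by simp only [Finset.mem_range]; omega)]
    refine (Finset.sum_eq_zero fun i hi => ?_).symm
    simp only [Finset.mem_range] at hi
    split_ifs with h
    · rcases Nat.lt_or_ge (m - i) i with hc | hc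
      · rw [Nat.choose_eq_zero_of_lt hc]
        simp
      · rw [Nat.choose_eq_zero_of_lt (show i < n - i by omega)]
        simp
    · rw [mul_zero]

/-- In `F₂[R]/(R^{m+1})`, with `R` the class of `X`, we have
`∑_{k ≤ m} (∑_i C(m-i,i) C(i,k-i)) R^k = (1+R)^{m+1}`. -/
theorem stmt9 (m : ℕ) :
    ∑ k ∈ Finset.range (m + 1),
        ((∑ i ∈ Finset.range (k + 1), Nat.choose (m - i) i * Nat.choose i (k - i) : ℕ) :
            Polynomial (ZMod 2) ⧸ Ideal.span {(X : Polynomial (ZMod 2)) ^ (m + 1)}) *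
          (Ideal.Quotient.mk (Ideal.span {(X : Polynomial (ZMod 2)) ^ (m + 1)}) X) ^ k =
      (1 + Ideal.Quotient.mk (Ideal.span {(X : Polynomial (ZMod 2)) ^ (m + 1)}) X) ^ (m + 1) := by
  have key : ∑ k ∈ Finset.range (m + 1),
      ((∑ i ∈ Finset.range (k + 1), Nat.choose (m - i) i * Nat.choose i (k - i) : ℕ) :
        Polynomial (ZMod 2)) * X ^ k = (1 + X) ^ (m + 1) + X ^ (m + 1) :=
    (sum_eq_fp m).trans (fp_closed m)
  have h := congrArg (Ideal.Quotient.mk (Ideal.span {(X : Polynomial (ZMod 2)) ^ (m + 1)})) key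
  simp only [map_sum, map_mul, map_pow, map_add, map_natCast, map_one] at h
  rw [h]
  have hz : (Ideal.Quotient.mk (Ideal.span {(X : Polynomial (ZMod 2)) ^ (m + 1)}) X) ^ (m + 1)
      = 0 := by
    rw [← map_pow]
    exact Ideal.Quotient.eq_zero_iff_mem.mpr (Ideal.mem_span_singleton_self _)
  rw [hz, add_zero]
end

section
/- Let l = (l_1,...,l_n) with all l_i > 0. Call S subset of [n] short if sum_{i in S} l_i < sum_{i not in S} l_i, and long otherwise. For G subset of [n-1], a subgee means G union {n} is short. Define Gtilde = [n-1] - G and Gbar = Gtilde minus its maximum element. Define a partial order: S <= T if T contains elements t_1 > ... > t_k with s_i <= t_i where S = {s_1 > ... > s_k}. Prove: if G_1 and G_2 are subsets of [n-1] with Gbar_1 <= G_2 (in this order) and G_1 is a subgee, then G_2 is not a subgee. -/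
/-- The domination partial order on subsets of `Fin n`: `Dominates T S` means `S ≤ T`,
i.e. `T` contains distinct elements `t₁ > … > t_k` with `s_i ≤ t_i`, where
`S = {s₁ > … > s_k}`; equivalently, there is an injection `f : S → T` with `s ≤ f s`. -/
def Dominates {n : ℕ} (T S : Finset (Fin n)) : Prop :=
  ∃ f : Fin n → Fin n, Set.InjOn f ↑S ∧ ∀ i ∈ S, f i ∈ T ∧ i ≤ f i

/-- `Gtilde = [n-1] - G`, the complement of `G ⊆ [n-1]` inside `[n-1]`
(the ground set `Fin (n+1)` represents `[n]`, with `Fin.last n` playing the role of `n`). -/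
def gtilde {n : ℕ} (G : Finset (Fin (n + 1))) : Finset (Fin (n + 1)) :=
  (Finset.univ.erase (Fin.last n)) \ G

/-- `Gbar` is `Gtilde` with its maximum element removed. -/
def gbar {n : ℕ} (G : Finset (Fin (n + 1))) : Finset (Fin (n + 1)) :=
  (gtilde G).filter fun i => ∃ j ∈ gtilde G, i < j

/-- `S` is short for the length vector `l` if `∑_{i ∈ S} l i < ∑_{i ∉ S} l i`. -/
def IsShort {n : ℕ} (l : Fin (n + 1) → ℝ) (S : Finset (Fin (n + 1))) : Prop :=
  ∑ i ∈ S, l i < ∑ i ∈ Sᶜ, l i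

/-- `G ⊆ [n-1]` is a subgee if `G ∪ {n}` is short. -/
def IsSubgee {n : ℕ} (l : Fin (n + 1) → ℝ) (G : Finset (Fin (n + 1))) : Prop :=
  IsShort l (insert (Fin.last n) G)


lemma dom_sum {n : ℕ} (l : Fin n → ℝ) (hl : ∀ i, 0 ≤ l i) (hm : Monotone l)
    {S T : Finset (Fin n)} (h : Dominates T S) : ∑ i ∈ S, l i ≤ ∑ i ∈ T, l i := by
  obtain ⟨f, hinj, hf⟩ := h
  calc ∑ i ∈ S, l i ≤ ∑ i ∈ S, l (f i) := Finset.sum_le_sum fun i hi => hm (hf i hi).2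
    _ = ∑ j ∈ S.image f, l j := (Finset.sum_image fun a ha b hb => hinj ha hb).symm
    _ ≤ ∑ j ∈ T, l j := Finset.sum_le_sum_of_subset_of_nonneg
        (Finset.image_subset_iff.mpr fun i hi => (hf i hi).1) (fun i _ _ => hl i)

lemma compl_insert {n : ℕ} (G : Finset (Fin (n + 1))) :
    (insert (Fin.last n) G)ᶜ = gtilde G := by
  ext i
  simp [gtilde, Finset.mem_erase, not_or]

lemma gbar_eq_erase {n : ℕ} (G : Finset (Fin (n + 1))) (hA : (gtilde G).Nonempty) :
    gbar G = (gtilde G).erase ((gtilde G).max' hA) := by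
  ext i
  simp only [gbar, Finset.mem_filter, Finset.mem_erase]
  constructor
  · rintro ⟨hi, j, hj, hij⟩
    exact ⟨fun h => absurd (h ▸ hij) (not_lt.2 (Finset.le_max' _ _ hj)), hi⟩
  · rintro ⟨hne, hi⟩
    exact ⟨hi, _, (gtilde G).max'_mem hA, lt_of_le_of_ne (Finset.le_max' _ _ hi) hne⟩

/-- Lemma 2.7 of the paper: for a generic positive length vector with `l n` the largest
side, if `G₁` is a subgee and `Gbar₁ ≤ G₂` in the domination order, then `G₂` is not
a subgee. -/
theorem stmt15 (n : ℕ) (l : Fin (n + 1) → ℝ) (hl : ∀ i, 0 < l i) (hmono : Monotone l)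
    (hgen : ∀ S : Finset (Fin (n + 1)), ∑ i ∈ S, l i ≠ ∑ i ∈ Sᶜ, l i)
    (G₁ G₂ : Finset (Fin (n + 1))) (h1 : Fin.last n ∉ G₁) (h2 : Fin.last n ∉ G₂)
    (hsub : IsSubgee l G₁) (hdom : Dominates G₂ (gbar G₁)) :
    ¬ IsSubgee l G₂ := by
  intro hsub2
  set A := gtilde G₁ with hAdef
  have hlast_notA : Fin.last n ∉ A := by simp [hAdef, gtilde]
  have hlast_notbar : Fin.last n ∉ gbar G₁ := fun h =>
    hlast_notA (Finset.mem_filter.mp h).1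
  -- Step 1
  have hstep1 : ∑ i ∈ A, l i ≤ ∑ i ∈ insert (Fin.last n) (gbar G₁), l i := by
    rcases A.eq_empty_or_nonempty with hA | hA
    · have hb : gbar G₁ = ∅ := by simp [gbar, ← hAdef, hA]
      rw [hA, hb]
      simpa using (hl (Fin.last n)).le
    · have hmax := A.max'_mem hA
      have herase : gbar G₁ = A.erase (A.max' hA) := gbar_eq_erase G₁ hA
      have hnm : Fin.last n ∉ A.erase (A.max' hA) := fun h =>
        hlast_notA (Finset.mem_of_mem_erase h)
      rw [herase, Finset.sum_insert hnm]
      have h3 : ∑ i ∈ A, l i = l (A.max' hA) + ∑ i ∈ A.erase (A.max' hA), l i :=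
        (Finset.add_sum_erase A l hmax).symm
      have h4 : l (A.max' hA) ≤ l (Fin.last n) := hmono (Fin.le_last _)
      linarith
  -- Step 2
  have hstep2 : ∑ i ∈ insert (Fin.last n) (gbar G₁), l i
      ≤ ∑ i ∈ insert (Fin.last n) G₂, l i := by
    apply dom_sum l (fun i => (hl i).le) hmono
    obtain ⟨f, hinj, hf⟩ := hdom
    classical
    refine ⟨fun i => if i ∈ gbar G₁ then f i else i, ?_, ?_⟩
    · intro a ha b hb hab
      simp only [Finset.coe_insert, Set.mem_insert_iff, Finset.mem_coe] at ha hb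
      dsimp only at hab
      rcases ha with rfl | ha <;> rcases hb with rfl | hb
      · rfl
      · rw [if_neg hlast_notbar, if_pos hb] at hab
        exact absurd (hab ▸ (hf b hb).1) h2
      · rw [if_pos ha, if_neg hlast_notbar] at hab
        exact absurd (hab ▸ (hf a ha).1) h2
      · rw [if_pos ha, if_pos hb] at hab
        exact hinj ha hb hab
    · intro i hi
      rcases Finset.mem_insert.mp hi with rfl | hi
      · simp [if_neg hlast_notbar]
      · simp only [if_pos hi]
        exact ⟨Finset.mem_insert_of_mem (hf i hi).1, (hf i hi).2⟩
  have hc1 : (insert (Fin.last n) G₁)ᶜ = A := compl_insert G₁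
  have ht2 := Finset.sum_add_sum_compl (insert (Fin.last n) G₂) l
  have ht1 := Finset.sum_add_sum_compl (insert (Fin.last n) G₁) l
  rw [hc1] at ht1
  have hs1 : ∑ i ∈ insert (Fin.last n) G₁, l i < ∑ i ∈ A, l i := by
    have h := hsub
    rw [IsSubgee, IsShort, hc1] at h
    exact h
  have hs2 : ∑ i ∈ insert (Fin.last n) G₂, l i
      < ∑ i ∈ (insert (Fin.last n) G₂)ᶜ, l i := hsub2
  linarith
end
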